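/- Assume λ_{k_c+1} > 0 and λ_{k_r+1} > 0, let γ > 0, and set γ̄_c = γ/λ_{k_c+1}, γ̄_r = γ/λ_{k_r+1}. Let X̄ ∈ LR(P_{k_r}, Q_{k_c}), Ẽ ∈ ℝ^{ρ_r×ρ_c}, X̃ = M_r X̄ M_c + Ẽ, and let X* be a minimizer over X ∈ ℝ^{p×n} of F(X) = ‖M_r X M_c − X̃‖_F² + γ̄_c tr(X L_c X^⊤) + γ̄_r tr(X^⊤ L_r X). Then ‖M_r X* M_c − X̃‖_F² + γ̄_c λ_{k_c+1} ‖X* Q̄_{k_c}‖_F² + γ̄_r λ_{k_r+1} ‖P̄_{k_r}^⊤ X*‖_F² ≤ ‖Ẽ‖_F² + (γ̄_c λ_{k_c} + γ̄_r λ_{k_r}) ‖X̄‖_F². -/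

import Mathlib

open Matrix

/-- Frobenius norm of a real matrix. -/
noncomputable def frobNorm {m n : Type*} [Fintype m] [Fintype n] (A : Matrix m n ℝ) : ℝ :=
  Real.sqrt (∑ i, ∑ j, (A i j) ^ 2)

/-- Euclidean norm of a real vector. -/
noncomputable def vecNorm {n : Type*} [Fintype n] (x : n → ℝ) : ℝ :=
  Real.sqrt (∑ i, (x i) ^ 2)

/-- A row-selection matrix: its rows are distinct standard basis vectors of `ℝ^p`. -/
def IsRowSelection {ρ p : ℕ} (M : Matrix (Fin ρ) (Fin p) ℝ) : Prop :=
  ∃ f : Fin ρ → Fin p, Function.Injective f ∧ ∀ i j, M i j = if j = f i then 1 else 0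

/-- A column-selection matrix: its columns are distinct standard basis vectors of `ℝ^n`. -/
def IsColSelection {n ρ : ℕ} (M : Matrix (Fin n) (Fin ρ) ℝ) : Prop :=
  ∃ f : Fin ρ → Fin n, Function.Injective f ∧ ∀ i j, M i j = if i = f j then 1 else 0

/-- `y` lies in the span of the columns of `P`. -/
def inColSpan {p k : ℕ} (P : Matrix (Fin p) (Fin k) ℝ) (y : Fin p → ℝ) : Prop :=
  ∃ c : Fin k → ℝ, y = P.mulVec c

/-- `Y ∈ LR(P, Q)`: every column of `Y` lies in the column span of `P` and every row of `Y`
lies in the column span of `Q`. -/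
def memLR {p n kr kc : ℕ} (P : Matrix (Fin p) (Fin kr) ℝ) (Q : Matrix (Fin n) (Fin kc) ℝ)
    (Y : Matrix (Fin p) (Fin n) ℝ) : Prop :=
  (∀ j, inColSpan P (fun i => Y i j)) ∧ (∀ i, inColSpan Q (fun j => Y i j))

/-- Graph cumulative coherence `ν = max_i √n ‖Q^⊤ e_i‖₂`. -/
noncomputable def coherence {n k : ℕ} (Q : Matrix (Fin n) (Fin k) ℝ) : ℝ :=
  ⨆ i : Fin n, Real.sqrt n * vecNorm (fun j => Q i j)

def frobSq {m n : Type*} [Fintype m] [Fintype n] (A : Matrix m n ℝ) : ℝ :=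
  ∑ i, ∑ j, (A i j) ^ 2

lemma frobNorm_sq {m n : Type*} [Fintype m] [Fintype n] (A : Matrix m n ℝ) :
    frobNorm A ^ 2 = frobSq A := by
  unfold frobNorm frobSq; exact Real.sq_sqrt (by positivity)

lemma frobSq_nonneg {m n : Type*} [Fintype m] [Fintype n] (A : Matrix m n ℝ) :
    0 ≤ frobSq A := by unfold frobSq; positivity

lemma frobSq_transpose {m n : Type*} [Fintype m] [Fintype n] (A : Matrix m n ℝ) :
    frobSq Aᵀ = frobSq A := by
  unfold frobSq; rw [Finset.sum_comm]; rfl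

lemma frobSq_eq_trace {m n : Type*} [Fintype m] [Fintype n] (A : Matrix m n ℝ) :
    frobSq A = Matrix.trace (A * Aᵀ) := by
  simp [frobSq, Matrix.trace, Matrix.diag, Matrix.mul_apply, sq]

lemma frobSq_neg {m n : Type*} [Fintype m] [Fintype n] (A : Matrix m n ℝ) :
    frobSq (-A) = frobSq A := by
  simp [frobSq]

lemma sum_split (n k : ℕ) (hk : k ≤ n) (g : Fin n → ℝ) :
    ∑ j, g j = (∑ s : Fin k, g (Fin.castLE hk s))
      + ∑ t : Fin (n - k), g (Fin.cast (by omega) (Fin.natAdd k t)) := by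
  have h : k + (n - k) = n := by omega
  rw [← Fin.sum_congr' g h, Fin.sum_univ_add]
  congr 1

lemma colsq_nonneg {m n : ℕ} (A : Matrix (Fin m) (Fin n) ℝ) (j : Fin n) :
    0 ≤ ∑ i, (A i j) ^ 2 := by positivity

lemma frobSq_cols {m n : ℕ} (A : Matrix (Fin m) (Fin n) ℝ) :
    frobSq A = ∑ j, ∑ i, (A i j) ^ 2 := Finset.sum_comm

lemma mul_submatrix_right {m n k' : ℕ} (X : Matrix (Fin m) (Fin n) ℝ)
    (Q : Matrix (Fin n) (Fin n) ℝ) (g : Fin k' → Fin n) :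
    X * Q.submatrix id g = (X * Q).submatrix id g := by
  ext i j; simp [Matrix.mul_apply]

lemma frobSq_mul_orth {m n : ℕ} (X : Matrix (Fin m) (Fin n) ℝ)
    (Q : Matrix (Fin n) (Fin n) ℝ) (hQ : Qᵀ * Q = 1) :
    frobSq (X * Q) = frobSq X := by
  have hQQ : Q * Qᵀ = 1 := mul_eq_one_comm.mp hQ
  rw [frobSq_eq_trace, frobSq_eq_trace, Matrix.transpose_mul, Matrix.mul_assoc,
    ← Matrix.mul_assoc Q, hQQ, Matrix.one_mul]

lemma trace_quad {m n : ℕ} (L Q : Matrix (Fin n) (Fin n) ℝ) (ev : Fin n → ℝ)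
    (hQ : Qᵀ * Q = 1) (hLQ : L * Q = Q * Matrix.diagonal ev)
    (X : Matrix (Fin m) (Fin n) ℝ) :
    Matrix.trace (X * L * Xᵀ) = ∑ j, ev j * ∑ i, ((X * Q) i j) ^ 2 := by
  have hQQ : Q * Qᵀ = 1 := mul_eq_one_comm.mp hQ
  have hL : L = Q * Matrix.diagonal ev * Qᵀ := by
    calc L = L * (Q * Qᵀ) := by rw [hQQ, Matrix.mul_one]
    _ = (L * Q) * Qᵀ := by rw [Matrix.mul_assoc]
    _ = Q * Matrix.diagonal ev * Qᵀ := by rw [hLQ]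
  have h2 : X * L * Xᵀ = (X * Q) * Matrix.diagonal ev * (X * Q)ᵀ := by
    rw [hL]; simp only [Matrix.transpose_mul, Matrix.mul_assoc]
  rw [h2]
  have h3 : Matrix.trace ((X * Q) * Matrix.diagonal ev * (X * Q)ᵀ)
      = ∑ i, ∑ j, ((X * Q) i j * ev j) * (X * Q) i j := by
    simp only [Matrix.trace, Matrix.diag]
    refine Finset.sum_congr rfl fun i _ => ?_
    rw [Matrix.mul_apply]
    exact Finset.sum_congr rfl fun j _ => by
      rw [Matrix.mul_diagonal, Matrix.transpose_apply]
  rw [h3, Finset.sum_comm]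
  refine Finset.sum_congr rfl fun j _ => ?_
  rw [Finset.mul_sum]
  exact Finset.sum_congr rfl fun i _ => by ring

lemma ev_nonneg {n : ℕ} (L Q : Matrix (Fin n) (Fin n) ℝ) (ev : Fin n → ℝ)
    (hL : L.PosSemidef) (hQ : Qᵀ * Q = 1) (hLQ : L * Q = Q * Matrix.diagonal ev)
    (j : Fin n) : 0 ≤ ev j := by
  have h := hL.dotProduct_mulVec_nonneg (fun i => Q i j)
  have hmv : L.mulVec (fun i => Q i j) = fun i => Q i j * ev j := by
    funext i
    have h1 : (L * Q) i j = (Q * Matrix.diagonal ev) i j := by rw [hLQ]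
    rw [Matrix.mul_diagonal] at h1
    show ∑ x, L i x * Q x j = Q i j * ev j
    rw [← Matrix.mul_apply, h1]
  have hnorm : ∑ i, Q i j * Q i j = 1 := by
    have h1 : (Qᵀ * Q) j j = (1 : Matrix (Fin n) (Fin n) ℝ) j j := by rw [hQ]
    simpa [Matrix.mul_apply, Matrix.one_apply] using h1
  have hdot : star (fun i => Q i j) ⬝ᵥ L.mulVec (fun i => Q i j) = ev j := by
    rw [hmv]
    simp only [dotProduct, Pi.star_apply, star_trivial]
    simp_rw [← mul_assoc]
    rw [← Finset.sum_mul, hnorm, one_mul]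
  rw [hdot] at h
  exact h

lemma quad_lower {m n k : ℕ} (hk : k < n)
    (L Q : Matrix (Fin n) (Fin n) ℝ) (ev : Fin n → ℝ)
    (hL : L.PosSemidef) (hmono : Monotone ev) (hQ : Qᵀ * Q = 1)
    (hLQ : L * Q = Q * Matrix.diagonal ev)
    (X : Matrix (Fin m) (Fin n) ℝ) :
    ev ⟨k, hk⟩ * frobSq (X * Q.submatrix id
        (fun t : Fin (n - k) => Fin.cast (by omega) (Fin.natAdd k t)))
      ≤ Matrix.trace (X * L * Xᵀ) := by
  have hkn : k + (n - k) = n := by omega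
  set g : Fin (n - k) → Fin n := fun t => Fin.cast hkn (Fin.natAdd k t) with hg
  rw [trace_quad L Q ev hQ hLQ X, mul_submatrix_right, frobSq_cols]
  have hsub : (∑ j, ∑ i, ((X * Q).submatrix id g i j) ^ 2)
      = ∑ t, ∑ i, ((X * Q) i (g t)) ^ 2 := rfl
  rw [hsub, sum_split n k hk.le (fun j => ev j * ∑ i, ((X * Q) i j) ^ 2)]
  have h1 : 0 ≤ ∑ s : Fin k, ev (Fin.castLE hk.le s) * ∑ i, ((X * Q) i (Fin.castLE hk.le s)) ^ 2 :=
    Finset.sum_nonneg fun s _ => mul_nonneg (ev_nonneg L Q ev hL hQ hLQ _) (colsq_nonneg _ _)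
  have h2 : ev ⟨k, hk⟩ * ∑ t, ∑ i, ((X * Q) i (g t)) ^ 2
      ≤ ∑ t, ev (g t) * ∑ i, ((X * Q) i (g t)) ^ 2 := by
    rw [Finset.mul_sum]
    refine Finset.sum_le_sum fun t _ => ?_
    refine mul_le_mul_of_nonneg_right (hmono ?_) (colsq_nonneg _ _)
    simp [hg, Fin.le_def]
  have h3 : (∑ t : Fin (n - k),
      (fun j => ev j * ∑ i, ((X * Q) i j) ^ 2) (Fin.cast (by omega) (Fin.natAdd k t)))
      = ∑ t, ev (g t) * ∑ i, ((X * Q) i (g t)) ^ 2 := rfl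
  rw [h3]
  linarith

lemma quad_upper {m n k : ℕ} (hk : k < n) (hk0 : 0 < k)
    (L Q : Matrix (Fin n) (Fin n) ℝ) (ev : Fin n → ℝ)
    (hL : L.PosSemidef) (hmono : Monotone ev) (hQ : Qᵀ * Q = 1)
    (hLQ : L * Q = Q * Matrix.diagonal ev)
    (X : Matrix (Fin m) (Fin n) ℝ)
    (hrow : ∀ i, ∃ c : Fin k → ℝ,
      (fun j => X i j) = (Q.submatrix id (Fin.castLE hk.le)).mulVec c) :
    Matrix.trace (X * L * Xᵀ) ≤ ev ⟨k - 1, by omega⟩ * frobSq X := by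
  have hkn : k + (n - k) = n := by omega
  have key : ∀ (i : Fin m) (j : Fin n), k ≤ (j : ℕ) → (X * Q) i j = 0 := by
    intro i j hj
    obtain ⟨c, hc⟩ := hrow i
    have hXit : ∀ t, X i t = ∑ s, Q t (Fin.castLE hk.le s) * c s := fun t => by
      have h0 := congrFun hc t
      simpa [Matrix.mulVec, dotProduct] using h0
    rw [Matrix.mul_apply]
    calc ∑ t, X i t * Q t j
        = ∑ t, ∑ s, (Q t (Fin.castLE hk.le s) * c s) * Q t j := by
          refine Finset.sum_congr rfl fun t _ => ?_; rw [hXit t, Finset.sum_mul]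
      _ = ∑ s, c s * ∑ t, Q t (Fin.castLE hk.le s) * Q t j := by
          rw [Finset.sum_comm]
          refine Finset.sum_congr rfl fun s _ => ?_
          rw [Finset.mul_sum]
          exact Finset.sum_congr rfl fun t _ => by ring
      _ = 0 := by
          refine Finset.sum_eq_zero fun s _ => ?_
          have hne : (Fin.castLE hk.le s) ≠ j := by
            intro h
            have := congrArg Fin.val h
            simp [Fin.castLE] at this
            omega
          have h1 : (Qᵀ * Q) (Fin.castLE hk.le s) j = 0 := by
            rw [hQ]; exact Matrix.one_apply_ne hne
          have h2 : ∑ t, Q t (Fin.castLE hk.le s) * Q t j = 0 := by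
            rw [← h1, Matrix.mul_apply]; rfl
          rw [h2, mul_zero]
  rw [trace_quad L Q ev hQ hLQ X,
    sum_split n k hk.le (fun j => ev j * ∑ i, ((X * Q) i j) ^ 2)]
  have htail : (∑ t : Fin (n - k),
      (fun j => ev j * ∑ i, ((X * Q) i j) ^ 2) (Fin.cast (by omega) (Fin.natAdd k t))) = 0 := by
    refine Finset.sum_eq_zero fun t _ => ?_
    have hz : ∀ i, (X * Q) i (Fin.cast (by omega : k + (n - k) = n) (Fin.natAdd k t)) = 0 :=
      fun i => key i _ (by simp)
    simp [hz]
  rw [htail, add_zero]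
  have hev0 : 0 ≤ ev ⟨k - 1, by omega⟩ := ev_nonneg L Q ev hL hQ hLQ _
  have hhead : ∑ s : Fin k, ev (Fin.castLE hk.le s) * ∑ i, ((X * Q) i (Fin.castLE hk.le s)) ^ 2
      ≤ ev ⟨k - 1, by omega⟩ * ∑ s : Fin k, ∑ i, ((X * Q) i (Fin.castLE hk.le s)) ^ 2 := by
    rw [Finset.mul_sum]
    refine Finset.sum_le_sum fun s _ => ?_
    refine mul_le_mul_of_nonneg_right (hmono ?_) (colsq_nonneg _ _)
    simp only [Fin.le_def, Fin.castLE]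
    omega
  have hfs : ∑ s : Fin k, ∑ i, ((X * Q) i (Fin.castLE hk.le s)) ^ 2 ≤ frobSq X := by
    rw [← frobSq_mul_orth X Q hQ, frobSq_cols,
      sum_split n k hk.le (fun j => ∑ i, ((X * Q) i j) ^ 2)]
    have : (0:ℝ) ≤ ∑ t : Fin (n - k),
        (fun j => ∑ i, ((X * Q) i j) ^ 2) (Fin.cast (by omega) (Fin.natAdd k t)) :=
      Finset.sum_nonneg fun t _ => colsq_nonneg _ _
    linarith
  calc ∑ s : Fin k, ev (Fin.castLE hk.le s) * ∑ i, ((X * Q) i (Fin.castLE hk.le s)) ^ 2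
      ≤ ev ⟨k - 1, by omega⟩ * ∑ s : Fin k, ∑ i, ((X * Q) i (Fin.castLE hk.le s)) ^ 2 := hhead
    _ ≤ ev ⟨k - 1, by omega⟩ * frobSq X := mul_le_mul_of_nonneg_left hfs hev0

/-- the basic optimality inequality for the alternate decoder:
`‖M_r X* M_c − X̃‖_F² + γ̄_c λ_{k_c+1} ‖X* Q̄_{k_c}‖_F² + γ̄_r λ_{k_r+1} ‖P̄_{k_r}^⊤ X*‖_F²
  ≤ ‖Ẽ‖_F² + (γ̄_c λ_{k_c} + γ̄_r λ_{k_r}) ‖X̄‖_F²`.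
The 1-indexed eigenvalues `λ_{k_c}`, `λ_{k_c+1}` are `evc ⟨k_c−1⟩`, `evc ⟨k_c⟩`
(similarly for `r`). -/
theorem alternate_decoder_optimality_inequality
    (p n ρr ρc kr kc : ℕ) (hkr0 : 0 < kr) (hkr : kr < p) (hkc0 : 0 < kc) (hkc : kc < n)
    (Lr : Matrix (Fin p) (Fin p) ℝ) (Lc : Matrix (Fin n) (Fin n) ℝ)
    (hLr : Lr.PosSemidef) (hLc : Lc.PosSemidef)
    (evr : Fin p → ℝ) (evc : Fin n → ℝ) (hevr : Monotone evr) (hevc : Monotone evc)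
    (P : Matrix (Fin p) (Fin p) ℝ) (Q : Matrix (Fin n) (Fin n) ℝ)
    (hPorth : Pᵀ * P = 1) (hQorth : Qᵀ * Q = 1)
    (hLrP : Lr * P = P * Matrix.diagonal evr)
    (hLcQ : Lc * Q = Q * Matrix.diagonal evc)
    (Pkr : Matrix (Fin p) (Fin kr) ℝ) (hPkr : Pkr = P.submatrix id (Fin.castLE hkr.le))
    (Qkc : Matrix (Fin n) (Fin kc) ℝ) (hQkc : Qkc = Q.submatrix id (Fin.castLE hkc.le))
    (Pbar : Matrix (Fin p) (Fin (p - kr)) ℝ)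
    (hPbar : Pbar = P.submatrix id
      (fun i : Fin (p - kr) => Fin.cast (by omega) (Fin.natAdd kr i)))
    (Qbar : Matrix (Fin n) (Fin (n - kc)) ℝ)
    (hQbar : Qbar = Q.submatrix id
      (fun i : Fin (n - kc) => Fin.cast (by omega) (Fin.natAdd kc i)))
    (Mr : Matrix (Fin ρr) (Fin p) ℝ) (hMr : IsRowSelection Mr)
    (Mc : Matrix (Fin n) (Fin ρc) ℝ) (hMc : IsColSelection Mc)
    (hlamc1 : 0 < evc ⟨kc, hkc⟩) (hlamr1 : 0 < evr ⟨kr, hkr⟩)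
    (γ γc γr : ℝ) (hγ : 0 < γ)
    (hγc : γc = γ / evc ⟨kc, hkc⟩) (hγr : γr = γ / evr ⟨kr, hkr⟩)
    (Xbar : Matrix (Fin p) (Fin n) ℝ) (hXbar : memLR Pkr Qkc Xbar)
    (Etil : Matrix (Fin ρr) (Fin ρc) ℝ)
    (Xtil : Matrix (Fin ρr) (Fin ρc) ℝ) (hXtil : Xtil = Mr * Xbar * Mc + Etil)
    (Xstar : Matrix (Fin p) (Fin n) ℝ)
    (hmin : ∀ X : Matrix (Fin p) (Fin n) ℝ,
      (frobNorm (Mr * Xstar * Mc - Xtil)) ^ 2 + γc * Matrix.trace (Xstar * Lc * Xstarᵀ)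
        + γr * Matrix.trace (Xstarᵀ * Lr * Xstar) ≤
      (frobNorm (Mr * X * Mc - Xtil)) ^ 2 + γc * Matrix.trace (X * Lc * Xᵀ)
        + γr * Matrix.trace (Xᵀ * Lr * X)) :
    (frobNorm (Mr * Xstar * Mc - Xtil)) ^ 2
      + γc * evc ⟨kc, hkc⟩ * (frobNorm (Xstar * Qbar)) ^ 2
      + γr * evr ⟨kr, hkr⟩ * (frobNorm (Pbarᵀ * Xstar)) ^ 2 ≤
    (frobNorm Etil) ^ 2
      + (γc * evc ⟨kc - 1, by omega⟩ + γr * evr ⟨kr - 1, by omega⟩)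
        * (frobNorm Xbar) ^ 2 := by
  have hγc0 : 0 < γc := hγc ▸ div_pos hγ hlamc1
  have hγr0 : 0 < γr := hγr ▸ div_pos hγ hlamr1
  have h1 := hmin Xbar
  have hE : Mr * Xbar * Mc - Xtil = -Etil := by rw [hXtil]; abel
  rw [hE] at h1
  simp only [frobNorm_sq] at h1 ⊢
  rw [frobSq_neg] at h1
  -- lower bounds for Xstar
  have lowC := quad_lower hkc Lc Q evc hLc hevc hQorth hLcQ Xstar
  rw [← hQbar] at lowC
  have lowR := quad_lower hkr Lr P evr hLr hevr hPorth hLrP Xstarᵀ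
  rw [Matrix.transpose_transpose, ← hPbar] at lowR
  have hPb : frobSq (Pbarᵀ * Xstar) = frobSq (Xstarᵀ * Pbar) := by
    rw [← frobSq_transpose (Xstarᵀ * Pbar), Matrix.transpose_mul, Matrix.transpose_transpose]
  rw [hPb]
  -- upper bounds for Xbar
  have upC := quad_upper hkc hkc0 Lc Q evc hLc hevc hQorth hLcQ Xbar
    (fun i => by rw [hQkc] at hXbar; exact hXbar.2 i)
  have upR := quad_upper hkr hkr0 Lr P evr hLr hevr hPorth hLrP Xbarᵀ
    (fun i' => by
      rw [hPkr] at hXbar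
      obtain ⟨c, hc⟩ := hXbar.1 i'
      exact ⟨c, by funext j; exact congrFun hc j⟩)
  rw [Matrix.transpose_transpose, frobSq_transpose] at upR
  have m1 := mul_le_mul_of_nonneg_left lowC hγc0.le
  have m2 := mul_le_mul_of_nonneg_left lowR hγr0.le
  have m3 := mul_le_mul_of_nonneg_left upC hγc0.le
  have m4 := mul_le_mul_of_nonneg_left upR hγr0.le
  nlinarith [m1, m2, m3, m4, h1]
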